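/- Let r be a positive integer and α a real number with α ≥ 2. If there exist an integer s with 1 ≤ s ≤ r and elements q₁, q₂, …, q_s ∈ ℒ_r(α) (repetitions allowed) such that ∑_{i=1}^s q_i⁻¹ = α − s, then there exists a finite tree T with at least 2 vertices, maximum degree Δ(T) ≤ r and Laplacian spectral radius μ(T) = α. -/

import Mathlib

open Finset

/-- The set `ℒ_r(α)`: the smallest set of reals containing `α - 1` and closed under the rule:
for `1 ≤ s ≤ r - 1` and `q₁, …, q_s ∈ ℒ_r(α)`, if `β := α − 1 − s − ∑ qᵢ⁻¹ > 0`
then `β ∈ ℒ_r(α)`. -/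
inductive LSet (r : ℕ) (α : ℝ) : ℝ → Prop
  | base : LSet r α (α - 1)
  | step (s : ℕ) (hs1 : 1 ≤ s) (hsr : s ≤ r - 1) (q : Fin s → ℝ)
      (hmem : ∀ i, LSet r α (q i))
      (hpos : 0 < α - 1 - (s : ℝ) - ∑ i, (q i)⁻¹) :
      LSet r α (α - 1 - (s : ℝ) - ∑ i, (q i)⁻¹)

/-- `μ` is the Laplacian spectral radius of `G`, i.e. the largest eigenvalue of the
Laplacian matrix `D(G) - A(G)`. -/
def IsLapSpecRad {V : Type} [Fintype V] (G : SimpleGraph V) (μ : ℝ) : Prop :=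
  letI := Classical.decEq V
  letI := Classical.decRel G.Adj
  μ ∈ spectrum ℝ (G.lapMatrix ℝ) ∧ ∀ x ∈ spectrum ℝ (G.lapMatrix ℝ), x ≤ μ

/-- The maximum degree of a finite simple graph. -/
noncomputable def maxDeg {V : Type} [Fintype V] (G : SimpleGraph V) : ℕ :=
  letI := Classical.decRel G.Adj
  G.maxDegree

namespace St7
set_option linter.unusedSectionVars false


def chl (n : ℕ) (f : ℕ → ℕ) (v : ℕ) : Finset ℕ := (Finset.Ico 1 n).filter (fun j => f j = v)

lemma mem_chl {n f v j} : j ∈ chl n f v ↔ 1 ≤ j ∧ j < n ∧ f j = v := by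
  simp [chl, Finset.mem_filter, Finset.mem_Ico, and_assoc]

structure Inner (r : ℕ) (α : ℝ) (n : ℕ) (f : ℕ → ℕ) (x : ℕ → ℝ) : Prop where
  hn : 1 ≤ n
  hf : ∀ i, 0 < i → i < n → f i < i
  hx : ∀ i, i < n → 0 < x i
  hx0 : x 0 = 1
  hdeg : ∀ v, 0 < v → v < n → (chl n f v).card + 1 ≤ r
  heq : ∀ v, 0 < v → v < n →
    ((chl n f v).card + 1 : ℝ) * x v + x (f v) + ∑ j ∈ chl n f v, x j = α * x v

def gf (n : ℕ) (f g : ℕ → ℕ) : ℕ → ℕ :=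
  fun k => if k < n then f k else if k = n then 0 else n + g (k - n)

def gx (n : ℕ) (x y : ℕ → ℝ) (c : ℝ) : ℕ → ℝ :=
  fun k => if k < n then x k else c * y (k - n)

section glue
variable {n m : ℕ} {f g : ℕ → ℕ}
variable (hn : 1 ≤ n) (hm : 1 ≤ m) (hf : ∀ i, 0 < i → i < n → f i < i)

omit hn hf in
include hm in
lemma chl_left {v : ℕ} (hv0 : 0 < v) (hv : v < n) :
    chl (n + m) (gf n f g) v = chl n f v := by
  ext j
  simp only [mem_chl, gf]
  constructor
  · rintro ⟨h1, h2, h3⟩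
    split_ifs at h3 with hj hj2
    · exact ⟨h1, hj, h3⟩
    · omega
    · omega
  · rintro ⟨h1, h2, h3⟩
    exact ⟨h1, by omega, by rw [if_pos h2]; exact h3⟩

include hn hm hf in
lemma chl_root :
    chl (n + m) (gf n f g) 0 = insert n (chl n f 0) := by
  ext j
  simp only [mem_chl, Finset.mem_insert]
  constructor
  · rintro ⟨h1, h2, h3⟩
    simp only [gf] at h3
    split_ifs at h3 with hj hj2
    · exact Or.inr ⟨h1, hj, h3⟩
    · exact Or.inl hj2
    · omega
  · rintro (rfl | ⟨h1, h2, h3⟩)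
    · exact ⟨hn, by omega, by simp [gf]⟩
    · exact ⟨h1, by omega, by simp only [gf, if_pos h2]; exact h3⟩

include hn hf in
omit hm in
lemma chl_right (k : ℕ) :
    chl (n + m) (gf n f g) (n + k) =
      (chl m g k).map ⟨(n + ·), add_right_injective n⟩ := by
  ext j
  simp only [mem_chl, Finset.mem_map, Function.Embedding.coeFn_mk]
  constructor
  · rintro ⟨h1, h2, h3⟩
    simp only [gf] at h3
    split_ifs at h3 with hj hj2
    · have := hf j h1 hj; omega
    · omega
    · exact ⟨j - n, ⟨by omega, by omega, by omega⟩, by omega⟩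
  · rintro ⟨a, ⟨ha1, ha2, ha3⟩, rfl⟩
    refine ⟨by omega, by omega, ?_⟩
    simp only [gf]
    rw [if_neg (by omega), if_neg (by omega), Nat.add_sub_cancel_left, ha3]

end glue

lemma n_not_mem_chl {n v : ℕ} {f : ℕ → ℕ} : n ∉ chl n f v := fun h => by
  have := mem_chl.1 h; omega

lemma attach {r : ℕ} {α : ℝ} {n f x} (A : Inner r α n f x) {m g y} (B : Inner r α m g y)
    {q : ℝ} (hq : 0 < q)
    (hBdeg : (chl m g 0).card + 1 ≤ r)
    (hBt : ((chl m g 0).card : ℝ) + ∑ j ∈ chl m g 0, y j = α - 1 - q) :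
    Inner r α (n + m) (gf n f g) (gx n x y q⁻¹) ∧
      (chl (n + m) (gf n f g) 0).card = (chl n f 0).card + 1 ∧
      ∑ j ∈ chl (n + m) (gf n f g) 0, (gx n x y q⁻¹) j
        = (∑ j ∈ chl n f 0, x j) + q⁻¹ := by
  have hn := A.hn; have hm := B.hn; have hf := A.hf
  have hq0 : q ≠ 0 := ne_of_gt hq
  have hqi : (0:ℝ) < q⁻¹ := inv_pos.2 hq
  set F := gf n f g with hF
  set X := gx n x y q⁻¹ with hX
  -- basic values
  have hXlt : ∀ k, k < n → X k = x k := fun k hk => by simp [hX, gx, hk]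
  have hXge : ∀ k, n ≤ k → X k = q⁻¹ * y (k - n) := fun k hk => by
    simp [hX, gx, Nat.not_lt.2 hk]
  have hXn : X n = q⁻¹ := by
    rw [hXge n le_rfl, Nat.sub_self, B.hx0, mul_one]
  have hFn : F n = 0 := by simp [hF, gf]
  have hsum_left : ∀ v, (∑ j ∈ chl n f v, X j) = ∑ j ∈ chl n f v, x j := by
    intro v
    refine Finset.sum_congr rfl fun j hj => hXlt j ?_
    exact (mem_chl.1 hj).2.1
  have hsum_right : ∀ k, (∑ j ∈ chl (n+m) F (n+k), X j) = q⁻¹ * ∑ j ∈ chl m g k, y j := by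
    intro k
    rw [chl_right hn hf k, Finset.sum_map, Finset.mul_sum]
    refine Finset.sum_congr rfl fun a _ => ?_
    simp only [Function.Embedding.coeFn_mk]
    rw [hXge (n+a) (by omega), Nat.add_sub_cancel_left]
  have hroot : chl (n+m) F 0 = insert n (chl n f 0) := chl_root hn hm hf
  have hcard0 : (chl (n+m) F 0).card = (chl n f 0).card + 1 := by
    rw [hroot, Finset.card_insert_of_notMem n_not_mem_chl]
  have hsum0 : ∑ j ∈ chl (n+m) F 0, X j = (∑ j ∈ chl n f 0, x j) + q⁻¹ := by
    rw [hroot, Finset.sum_insert n_not_mem_chl, hXn, hsum_left, add_comm]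
  refine ⟨⟨by omega, ?_, ?_, ?_, ?_, ?_⟩, hcard0, hsum0⟩
  · -- hf
    intro i hi0 hi
    simp only [hF, gf]
    split_ifs with h1 h2
    · exact A.hf i hi0 h1
    · omega
    · have := B.hf (i - n) (by omega) (by omega); omega
  · -- hx
    intro i hi
    by_cases h : i < n
    · rw [hXlt i h]; exact A.hx i h
    · rw [hXge i (by omega)]
      exact mul_pos hqi (B.hx _ (by omega))
  · rw [hXlt 0 (by omega)]; exact A.hx0
  · -- hdeg
    intro v hv0 hv
    rcases lt_trichotomy v n with h | h | h
    · rw [chl_left hm hv0 h]; exact A.hdeg v hv0 h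
    · rw [h]
      have : chl (n+m) F n = chl (n+m) F (n+0) := by norm_num
      rw [this, chl_right hn hf 0, Finset.card_map]
      exact hBdeg
    · have hv' : v = n + (v - n) := by omega
      rw [hv', chl_right hn hf (v-n), Finset.card_map]
      exact B.hdeg (v-n) (by omega) (by omega)
  · -- heq
    intro v hv0 hv
    rcases lt_trichotomy v n with h | h | h
    · have hFv : F v = f v := by simp [hF, gf, h]
      rw [chl_left hm hv0 h, hsum_left, hXlt v h, hFv,
        hXlt (f v) (by have := A.hf v hv0 h; omega)]
      exact A.heq v hv0 h
    · rw [h]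
      have h0 : chl (n+m) F n = chl (n+m) F (n+0) := by norm_num
      rw [h0, hsum_right 0, chl_right hn hf 0, Finset.card_map, hXn, hFn,
        hXlt 0 (by omega), A.hx0]
      have hBs : ∑ j ∈ chl m g 0, y j = α - 1 - q - (chl m g 0).card := by linarith
      rw [hBs]
      field_simp
      ring
    · have hv' : v = n + (v - n) := by omega
      have hk0 : 0 < v - n := by omega
      have hkm : v - n < m := by omega
      rw [hv', hsum_right (v-n), chl_right hn hf (v-n), Finset.card_map]
      have hFv : F (n + (v-n)) = n + g (v - n) := by
        simp only [hF, gf]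
        rw [if_neg (by omega), if_neg (by omega), Nat.add_sub_cancel_left]
      rw [hFv, hXge (n + (v-n)) (by omega), Nat.add_sub_cancel_left,
        hXge (n + g (v-n)) (by omega), Nat.add_sub_cancel_left]
      have hB := B.heq (v-n) hk0 hkm
      linear_combination q⁻¹ * hB


def Pkg
 (r : ℕ) (α : ℝ) (q : ℝ) : Prop :=
  ∃ n f x, Inner r α n f x ∧ (chl n f 0).card + 1 ≤ r ∧
    ((chl n f 0).card : ℝ) + ∑ j ∈ chl n f 0, x j = α - 1 - q

lemma chl_one (f : ℕ → ℕ) (v : ℕ) : chl 1 f v = ∅ := by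
  simp [chl]

lemma base_inner (r : ℕ) (α : ℝ) : Inner r α 1 (fun _ => 0) (fun _ => 1) := by
  refine ⟨le_rfl, by omega, fun _ _ => one_pos, rfl, by omega, by omega⟩

lemma multi (r : ℕ) (α : ℝ) : ∀ (s : ℕ) (q : Fin s → ℝ), (∀ i, 0 < q i) →
    (∀ i, Pkg r α (q i)) →
    ∃ n f x, Inner r α n f x ∧ (chl n f 0).card = s ∧ s < n ∧
      ∑ j ∈ chl n f 0, x j = ∑ i, (q i)⁻¹ := by
  intro s
  induction s with
  | zero =>
    intro q hq hp
    exact ⟨1, fun _ => 0, fun _ => 1, base_inner r α, by simp [chl_one], one_pos, by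
      simp [chl_one]⟩
  | succ s ih =>
    intro q hq hp
    obtain ⟨n, f, x, A, hcard, hlt, hsum⟩ :=
      ih (q ∘ Fin.castSucc) (fun i => hq _) (fun i => hp _)
    obtain ⟨m, g, y, B, hBdeg, hBt⟩ := hp (Fin.last s)
    obtain ⟨A', hc', hs'⟩ := attach A B (hq (Fin.last s)) hBdeg hBt
    refine ⟨n + m, _, _, A', by rw [hc', hcard], by have := B.hn; omega, ?_⟩
    rw [hs', hsum, Fin.sum_univ_castSucc]
    rfl

lemma lset_pos {r : ℕ} {α : ℝ} (hα : 2 ≤ α) {q : ℝ} (h : LSet r α q) : 0 < q := by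
  induction h with
  | base => linarith
  | step s hs1 hsr q hmem hpos ih => exact hpos

lemma lset_pkg {r : ℕ} {α : ℝ} (hr : 1 ≤ r) (hα : 2 ≤ α) {q : ℝ} (h : LSet r α q) :
    Pkg r α q := by
  induction h with
  | base =>
    refine ⟨1, fun _ => 0, fun _ => 1, base_inner r α, by simp [chl_one]; omega, ?_⟩
    simp [chl_one]
  | step s hs1 hsr q hmem hpos ih =>
    obtain ⟨n, f, x, A, hcard, hlt, hsum⟩ := multi r α s q (fun i => lset_pos hα (hmem i)) ih
    refine ⟨n, f, x, A, by omega, ?_⟩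
    rw [hcard, hsum]
    ring

lemma full {r : ℕ} {α : ℝ} (hr : 1 ≤ r) (hα : 2 ≤ α)
    {s : ℕ} (hs1 : 1 ≤ s) (hsr : s ≤ r) {q : Fin s → ℝ}
    (hmem : ∀ i, LSet r α (q i)) (hsum : ∑ i, (q i)⁻¹ = α - (s : ℝ)) :
    ∃ (n : ℕ) (f : ℕ → ℕ) (x : ℕ → ℝ), 2 ≤ n ∧ (∀ i, 0 < i → i < n → f i < i) ∧ (∀ i, i < n → 0 < x i) ∧
      (chl n f 0).card ≤ r ∧ (∀ v, 0 < v → v < n → (chl n f v).card + 1 ≤ r) ∧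
      (((chl n f 0).card : ℝ) * x 0 + ∑ j ∈ chl n f 0, x j = α * x 0) ∧
      (∀ v, 0 < v → v < n →
        ((chl n f v).card + 1 : ℝ) * x v + x (f v) + ∑ j ∈ chl n f v, x j = α * x v) := by
  obtain ⟨n, f, x, A, hcard, hlt, hS⟩ :=
    multi r α s q (fun i => lset_pos hα (hmem i)) (fun i => lset_pkg hr hα (hmem i))
  refine ⟨n, f, x, by omega, A.hf, A.hx, by omega, A.hdeg, ?_, A.heq⟩
  rw [hcard, hS, hsum, A.hx0]
  ring


/-- the simple graph on `Fin n` determined by a parent function -/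
def pg (n : ℕ) (f : ℕ → ℕ) : SimpleGraph (Fin n) where
  Adj a b := ((a : ℕ) < b ∧ f b = a) ∨ ((b : ℕ) < a ∧ f a = b)
  symm := ⟨fun a b h => by tauto⟩
  loopless := ⟨fun a h => by rcases h with ⟨h, _⟩ | ⟨h, _⟩ <;> omega⟩

section pg
variable {n : ℕ} {f : ℕ → ℕ} (hn : 1 ≤ n) (hf : ∀ i, 0 < i → i < n → f i < i)

include hn hf in
lemma pg_reachable : ∀ (k : ℕ) (a : Fin n), (a : ℕ) ≤ k → (pg n f).Reachable a ⟨0, hn⟩ := by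
  intro k
  induction k with
  | zero =>
    intro a ha
    have : a = ⟨0, hn⟩ := Fin.ext (show (a : ℕ) = 0 by omega)
    rw [this]
  | succ k ih =>
    intro a ha
    by_cases h0 : (a : ℕ) = 0
    · have : a = ⟨0, hn⟩ := Fin.ext (show (a : ℕ) = 0 by omega)
      rw [this]
    · have hfa : f a < a := hf a (by omega) a.isLt
      have hb : f (a : ℕ) < n := lt_trans hfa a.isLt
      have hadj : (pg n f).Adj a ⟨f a, hb⟩ := Or.inr ⟨hfa, rfl⟩
      exact hadj.reachable.trans (ih ⟨f a, hb⟩ (by simp; omega))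

include hn hf in
lemma pg_connected : (pg n f).Connected := by
  haveI : Nonempty (Fin n) := ⟨⟨0, hn⟩⟩
  refine ⟨fun a b => ?_⟩
  exact (pg_reachable hn hf a a le_rfl).trans (pg_reachable hn hf b b le_rfl).symm

include hf in
lemma pg_acyclic : (pg n f).IsAcyclic := by
  intro v c hc
  have hnem : c.support.toFinset.Nonempty :=
    ⟨v, List.mem_toFinset.2 c.start_mem_support⟩
  set M := c.support.toFinset.max' hnem with hMdef
  have hM : M ∈ c.support := List.mem_toFinset.1 (c.support.toFinset.max'_mem hnem)
  have hMax : ∀ u, u ∈ c.support → u ≤ M := fun u hu =>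
    Finset.le_max' _ _ (List.mem_toFinset.2 hu)
  have hc' : (c.rotate M hM).IsCycle := hc.rotate hM
  have htail : ∀ u, u ∈ (c.rotate M hM).support.tail → u ∈ c.support := by
    intro u hu
    have := (SimpleGraph.Walk.support_rotate c M hM).mem_iff.1 hu
    exact List.mem_of_mem_tail this
  obtain ⟨u, hadj, q, hq⟩ := SimpleGraph.Walk.not_nil_iff.1 hc'.not_nil
  rw [hq] at hc' htail
  rw [SimpleGraph.Walk.cons_isCycle_iff] at hc'
  obtain ⟨hqpath, hedge⟩ := hc'
  have huM : u ≠ M := fun h => (pg n f).irrefl (h ▸ hadj)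
  -- last edge of q
  have hqrev : ¬ q.reverse.Nil := by
    intro h
    exact huM (SimpleGraph.Walk.Nil.eq h).symm
  obtain ⟨w, hadj2, q2, hq2⟩ := SimpleGraph.Walk.not_nil_iff.1 hqrev
  have hwM : w ≠ M := fun h => (pg n f).irrefl (h ▸ hadj2)
  have hwedge : s(M, w) ∈ q.edges := by
    have : s(M, w) ∈ q.reverse.edges := by
      rw [hq2]; simp
    rwa [SimpleGraph.Walk.edges_reverse, List.mem_reverse] at this
  -- memberships in c.support
  have hu_mem : u ∈ c.support := by
    apply htail
    simpa [SimpleGraph.Walk.support_cons] using q.start_mem_support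
  have hw_mem : w ∈ c.support := by
    apply htail
    have hwq : w ∈ q.support := by
      have : w ∈ q.reverse.support := by
        rw [hq2, SimpleGraph.Walk.support_cons]
        exact List.mem_cons_of_mem _ q2.start_mem_support
      rwa [SimpleGraph.Walk.support_reverse, List.mem_reverse] at this
    simpa [SimpleGraph.Walk.support_cons] using hwq
  have hu_lt : (u : ℕ) < M := by
    have := hMax u hu_mem
    exact lt_of_le_of_ne (by exact_mod_cast this) (fun h => huM (Fin.ext h))
  have hw_lt : (w : ℕ) < M := by
    have := hMax w hw_mem
    exact lt_of_le_of_ne (by exact_mod_cast this) (fun h => hwM (Fin.ext h))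
  have hfu : f (M : ℕ) = u := by
    rcases hadj with ⟨h1, h2⟩ | ⟨h1, h2⟩
    · omega
    · exact h2
  have hfw : f (M : ℕ) = w := by
    rcases hadj2 with ⟨h1, h2⟩ | ⟨h1, h2⟩
    · omega
    · exact h2
  have huw : u = w := Fin.ext (by omega)
  rw [← huw] at hwedge
  exact hedge hwedge

include hn hf in
lemma pg_isTree : (pg n f).IsTree := ⟨pg_connected hn hf, pg_acyclic hf⟩

include hf in
lemma nbr_map [DecidableRel (pg n f).Adj] (a : Fin n) :
    ((pg n f).neighborFinset a).map Fin.valEmbedding =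
      (chl n f ↑a) ∪ (if (a : ℕ) = 0 then ∅ else {f ↑a}) := by
  ext k
  simp only [Finset.mem_map, SimpleGraph.mem_neighborFinset, Fin.valEmbedding_apply,
    Finset.mem_union, mem_chl]
  constructor
  · rintro ⟨u, hu, rfl⟩
    rcases hu with ⟨h1, h2⟩ | ⟨h1, h2⟩
    · left
      exact ⟨by omega, u.isLt, h2⟩
    · right
      rw [if_neg (by omega)]
      simp [h2]
  · rintro (⟨h1, h2, h3⟩ | hk)
    · refine ⟨⟨k, h2⟩, Or.inl ⟨show (a : ℕ) < k from ?_, h3⟩, rfl⟩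
      have := hf k h1 h2
      omega
    · split_ifs at hk with h0
      · simp at hk
      · simp only [Finset.mem_singleton] at hk
        subst hk
        have hfa : f (a : ℕ) < (a : ℕ) := hf a (by omega) a.isLt
        exact ⟨⟨f a, lt_trans hfa a.isLt⟩, Or.inr ⟨hfa, rfl⟩, rfl⟩

include hf in
lemma nbr_sum [DecidableRel (pg n f).Adj] (a : Fin n) (w : ℕ → ℝ) :
    ∑ u ∈ (pg n f).neighborFinset a, w ↑u =
      (∑ j ∈ chl n f ↑a, w j) + (if (a : ℕ) = 0 then 0 else w (f ↑a)) := by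
  have h1 : ∑ u ∈ (pg n f).neighborFinset a, w ↑u
      = ∑ k ∈ ((pg n f).neighborFinset a).map Fin.valEmbedding, w k := by
    rw [Finset.sum_map]
    rfl
  rw [h1, nbr_map hf a]
  rw [Finset.sum_union]
  · split_ifs with h0
    · simp
    · simp
  · -- disjoint
    intro t ht1 ht2 k hk
    exfalso
    have h3 := mem_chl.1 (ht1 hk)
    have h4 := ht2 hk
    split_ifs at h4 with h0
    · simp at h4
    · simp only [Finset.mem_singleton] at h4
      have hfa : f (a : ℕ) < (a : ℕ) := hf a (by omega) a.isLt
      have h5 := hf k h3.1 h3.2.1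
      omega

include hf in
lemma pg_degree [DecidableRel (pg n f).Adj] (a : Fin n) :
    (pg n f).degree a = (chl n f ↑a).card + (if (a : ℕ) = 0 then 0 else 1) := by
  rw [SimpleGraph.degree, ← Finset.card_map Fin.valEmbedding, nbr_map hf a,
    Finset.card_union_of_disjoint]
  · split_ifs <;> simp
  · intro t ht1 ht2 k hk
    exfalso
    have h3 := mem_chl.1 (ht1 hk)
    have h4 := ht2 hk
    split_ifs at h4 with h0
    · simp at h4
    · simp only [Finset.mem_singleton] at h4
      have hfa : f (a : ℕ) < (a : ℕ) := hf a (by omega) a.isLt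
      have h5 := hf k h3.1 h3.2.1
      omega

end pg



def dep (f : ℕ → ℕ) : ℕ → ℕ
  | v => if h : f v < v then dep f (f v) + 1 else 0
  decreasing_by exact h

lemma dep_eq (f : ℕ → ℕ) (v : ℕ) : dep f v = if f v < v then dep f (f v) + 1 else 0 := by
  rw [dep]
  split_ifs with h <;> simp [h]

noncomputable def sgn (f : ℕ → ℕ) (v : ℕ) : ℝ := (-1) ^ dep f v

lemma sgn_child {f : ℕ → ℕ} {c : ℕ} (h : f c < c) : sgn f c = - sgn f (f c) := by
  unfold sgn
  rw [dep_eq f c, if_pos h, pow_succ]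
  ring

lemma sgn_sq (f : ℕ → ℕ) (v : ℕ) : sgn f v * sgn f v = 1 := by
  unfold sgn
  rw [← pow_add]
  exact Even.neg_one_pow ⟨dep f v, rfl⟩


namespace Spec

open SimpleGraph Matrix

lemma mem_spectrum_of_eigen {N : Type} [Fintype N] [DecidableEq N] {M : Matrix N N ℝ}
    {μ : ℝ} {v : N → ℝ} (hv : v ≠ 0) (h : M *ᵥ v = μ • v) : μ ∈ spectrum ℝ M := by
  rw [← AlgEquiv.spectrum_eq (Matrix.toLinAlgEquiv' (R := ℝ) (n := N)) M,
    ← Module.End.hasEigenvalue_iff_mem_spectrum]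
  apply Module.End.hasEigenvalue_of_hasEigenvector (x := v)
  refine ⟨Module.End.mem_eigenspace_iff.2 ?_, hv⟩
  show Matrix.toLinAlgEquiv' M v = μ • v
  rw [show (Matrix.toLinAlgEquiv' M : (N → ℝ) →ₗ[ℝ] (N → ℝ)) v = M *ᵥ v from rfl, h]

lemma eigen_of_mem_spectrum {N : Type} [Fintype N] [DecidableEq N] {M : Matrix N N ℝ}
    {μ : ℝ} (h : μ ∈ spectrum ℝ M) : ∃ v : N → ℝ, v ≠ 0 ∧ M *ᵥ v = μ • v := by
  rw [← AlgEquiv.spectrum_eq (Matrix.toLinAlgEquiv' (R := ℝ) (n := N)) M,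
    ← Module.End.hasEigenvalue_iff_mem_spectrum] at h
  obtain ⟨v, hv1, hv2⟩ := h.exists_hasEigenvector
  exact ⟨v, hv2, by
    have := Module.End.mem_eigenspace_iff.1 hv1
    rw [show (Matrix.toLinAlgEquiv' M : (N → ℝ) →ₗ[ℝ] (N → ℝ)) v = M *ᵥ v from rfl] at this
    exact this⟩

lemma nbr_swap {V : Type} [Fintype V] [DecidableEq V] (G : SimpleGraph V)
    [DecidableRel G.Adj] (F : V → V → ℝ) :
    ∑ a : V, ∑ u ∈ G.neighborFinset a, F a u = ∑ u : V, ∑ a ∈ G.neighborFinset u, F a u := by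
  simp only [neighborFinset_eq_filter, Finset.sum_filter]
  rw [Finset.sum_comm]
  refine Finset.sum_congr rfl fun u _ => Finset.sum_congr rfl fun a _ => ?_
  exact if_congr (G.adj_comm a u) rfl rfl

lemma spec_le {V : Type} [Fintype V] [DecidableEq V] (G : SimpleGraph V)
    [DecidableRel G.Adj] (x : V → ℝ) (hx : ∀ v, 0 < x v) (α : ℝ)
    (heq : ∀ v, (G.degree v : ℝ) * x v + ∑ u ∈ G.neighborFinset v, x u = α * x v)
    (lam : ℝ) (hlam : lam ∈ spectrum ℝ (G.lapMatrix ℝ)) : lam ≤ α := by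
  obtain ⟨y, hy0, hy⟩ := eigen_of_mem_spectrum hlam
  set S := ∑ a : V, x a * |y a| with hS
  have hSpos : 0 < S := by
    obtain ⟨a, ha⟩ := Function.ne_iff.1 hy0
    refine Finset.sum_pos' (fun b _ => mul_nonneg (hx b).le (abs_nonneg _)) ⟨a, Finset.mem_univ a, ?_⟩
    exact mul_pos (hx a) (abs_pos.2 ha)
  have key : |lam| * S ≤ α * S := by
    have h1 : |lam| * S = ∑ a : V, x a * |(G.lapMatrix ℝ *ᵥ y) a| := by
      rw [hS, Finset.mul_sum]
      refine Finset.sum_congr rfl fun a _ => ?_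
      rw [hy]
      simp [abs_mul]
      ring
    have h2 : ∀ a : V, x a * |(G.lapMatrix ℝ *ᵥ y) a| ≤
        x a * ((G.degree a : ℝ) * |y a| + ∑ u ∈ G.neighborFinset a, |y u|) := by
      intro a
      refine mul_le_mul_of_nonneg_left ?_ (hx a).le
      rw [lapMatrix_mulVec_apply]
      refine (abs_sub _ _).trans ?_
      gcongr
      · rw [abs_mul, Nat.abs_cast]
      · exact (Finset.abs_sum_le_sum_abs _ _)
    have h3 : ∑ a : V, x a * ((G.degree a : ℝ) * |y a| + ∑ u ∈ G.neighborFinset a, |y u|)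
        = α * S := by
      have hswap : ∑ a : V, ∑ u ∈ G.neighborFinset a, x a * |y u|
          = ∑ u : V, ∑ a ∈ G.neighborFinset u, x a * |y u| := nbr_swap G _
      calc ∑ a : V, x a * ((G.degree a : ℝ) * |y a| + ∑ u ∈ G.neighborFinset a, |y u|)
          = (∑ a : V, (G.degree a : ℝ) * x a * |y a|)
            + ∑ a : V, ∑ u ∈ G.neighborFinset a, x a * |y u| := by
            rw [← Finset.sum_add_distrib]
            refine Finset.sum_congr rfl fun a _ => ?_
            rw [mul_add, Finset.mul_sum]
            ring
        _ = (∑ a : V, (G.degree a : ℝ) * x a * |y a|)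
            + ∑ u : V, (∑ a ∈ G.neighborFinset u, x a) * |y u| := by
            rw [hswap]
            congr 1
            exact Finset.sum_congr rfl fun u _ => (Finset.sum_mul _ _ _).symm
        _ = ∑ u : V, ((G.degree u : ℝ) * x u + ∑ a ∈ G.neighborFinset u, x a) * |y u| := by
            rw [← Finset.sum_add_distrib]
            refine Finset.sum_congr rfl fun u _ => by ring
        _ = ∑ u : V, (α * x u) * |y u| := by
            refine Finset.sum_congr rfl fun u _ => by rw [heq u]
        _ = α * S := by
            rw [hS, Finset.mul_sum]
            exact Finset.sum_congr rfl fun u _ => by ring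
    calc |lam| * S = ∑ a : V, x a * |(G.lapMatrix ℝ *ᵥ y) a| := h1
      _ ≤ ∑ a : V, x a * ((G.degree a : ℝ) * |y a| + ∑ u ∈ G.neighborFinset a, |y u|) :=
          Finset.sum_le_sum fun a _ => h2 a
      _ = α * S := h3
  have : lam * S ≤ α * S := le_trans (by nlinarith [le_abs_self lam, hSpos]) key
  exact le_of_mul_le_mul_right this hSpos

end Spec


section eigen
open Matrix
variable {n : ℕ} {f : ℕ → ℕ} (hf : ∀ i, 0 < i → i < n → f i < i)

lemma sgn_adj {a b : Fin n} (h : (pg n f).Adj a b) : sgn f ↑b = - sgn f ↑a := by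
  rcases h with ⟨hlt, hfb⟩ | ⟨hlt, hfa⟩
  · have := sgn_child (c := (b : ℕ)) (f := f) (by rw [hfb]; exact hlt)
    rw [hfb] at this
    exact this
  · have := sgn_child (c := (a : ℕ)) (f := f) (by rw [hfa]; exact hlt)
    rw [hfa] at this
    linarith

lemma lap_eigen [DecidableEq (Fin n)] [DecidableRel (pg n f).Adj] {α : ℝ} {x : ℕ → ℝ}
    (heqall : ∀ a : Fin n, ((pg n f).degree a : ℝ) * x ↑a
      + ∑ u ∈ (pg n f).neighborFinset a, x ↑u = α * x ↑a) :
    (pg n f).lapMatrix ℝ *ᵥ (fun a : Fin n => sgn f ↑a * x ↑a)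
      = α • (fun a : Fin n => sgn f ↑a * x ↑a) := by
  funext a
  rw [show (α • (fun a : Fin n => sgn f ↑a * x ↑a)) a = α * (sgn f ↑a * x ↑a) from rfl,
    SimpleGraph.lapMatrix_mulVec_apply]
  have hsum : ∑ u ∈ (pg n f).neighborFinset a, sgn f ↑u * x ↑u
      = - sgn f ↑a * ∑ u ∈ (pg n f).neighborFinset a, x ↑u := by
    calc ∑ u ∈ (pg n f).neighborFinset a, sgn f ↑u * x ↑u
        = ∑ u ∈ (pg n f).neighborFinset a, - sgn f ↑a * x ↑u :=
          Finset.sum_congr rfl fun u hu => by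
            rw [sgn_adj ((SimpleGraph.mem_neighborFinset _ _ _).1 hu)]
      _ = - sgn f ↑a * ∑ u ∈ (pg n f).neighborFinset a, x ↑u := by rw [Finset.mul_sum]
  rw [hsum]
  linear_combination (sgn f (a : ℕ)) * heqall a

end eigen
end St7

theorem stmt_7 (r : ℕ) (hr : 1 ≤ r) (α : ℝ) (hα : 2 ≤ α)
    (s : ℕ) (hs1 : 1 ≤ s) (hsr : s ≤ r) (q : Fin s → ℝ)
    (hmem : ∀ i, LSet r α (q i)) (hsum : ∑ i, (q i)⁻¹ = α - (s : ℝ)) :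
    ∃ (n : ℕ) (G : SimpleGraph (Fin n)),
      2 ≤ n ∧ G.IsTree ∧ maxDeg G ≤ r ∧ IsLapSpecRad G α := by
  obtain ⟨n, f, x, hn2, hf, hx, hdr, hdeg, heq0, heqv⟩ := St7.full hr hα hs1 hsr hmem hsum
  have hn1 : 1 ≤ n := by omega
  letI := Classical.decEq (Fin n)
  letI := Classical.decRel (St7.pg n f).Adj
  refine ⟨n, St7.pg n f, hn2, St7.pg_isTree hn1 hf, ?_, ?_⟩
  · -- max degree
    show (St7.pg n f).maxDegree ≤ r
    apply SimpleGraph.maxDegree_le_of_forall_degree_le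
    intro v
    rw [St7.pg_degree hf v]
    by_cases h0 : (v : ℕ) = 0
    · rw [if_pos h0, h0]
      omega
    · rw [if_neg h0]
      exact hdeg ↑v (by omega) v.isLt
  · -- spectral radius
    have star : ∀ a : Fin n, (((St7.pg n f).degree a : ℝ)) * x ↑a
        + ∑ u ∈ (St7.pg n f).neighborFinset a, x ↑u = α * x ↑a := by
      intro a
      rw [St7.pg_degree hf a, St7.nbr_sum hf a x]
      by_cases h0 : (a : ℕ) = 0
      · rw [if_pos h0, if_pos h0, h0]
        push_cast
        linarith [heq0]
      · rw [if_neg h0, if_neg h0]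
        have h := heqv ↑a (by omega) a.isLt
        push_cast
        push_cast at h
        linarith [h]
    constructor
    · refine St7.Spec.mem_spectrum_of_eigen ?_ (St7.lap_eigen star)
      intro hcon
      have h0 : St7.sgn f 0 = 1 := by
        unfold St7.sgn
        rw [St7.dep_eq]
        simp
      have := congrFun hcon ⟨0, by omega⟩
      simp only [Pi.zero_apply] at this
      rw [h0, one_mul] at this
      exact absurd this (ne_of_gt (hx 0 (by omega)))
    · intro lam hlam
      exact St7.Spec.spec_le (St7.pg n f) (fun v => x ↑v) (fun v => hx ↑v v.isLt) α star lam hlam
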